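/- arXiv:2012.01361 — 2 statements merged into one kernel-verified Lean document; each statement's English description precedes it below -/
import Mathlib

section
/- Let a₁,…,aₙ be nonnegative integers and let ℂˣ act on ℂⁿ by t • v = (t^{a₁}v₁,…,t^{aₙ}vₙ). Then for v ∈ ℂⁿ, the orbit ℂˣ • v is a closed subset of ℂⁿ if and only if v is a fixed point of the action, i.e., vᵢ = 0 for every i with aᵢ ≠ 0. -/
lemma aux_tendsto_inv : Filter.Tendsto (fun k : ℕ => (((k : ℂ) + 1))⁻¹)
    Filter.atTop (nhds 0) := by
  have h : Filter.Tendsto (fun k : ℕ => ((1 / ((k : ℝ) + 1) : ℝ) : ℂ))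
      Filter.atTop (nhds ((0 : ℝ) : ℂ)) :=
    (Complex.continuous_ofReal.tendsto _).comp tendsto_one_div_add_atTop_nhds_zero_nat
  simpa [one_div] using h

/-- Let `a₁,…,aₙ` be nonnegative integers and let `ℂˣ` act on `ℂⁿ` by
`t • v = (t^{a₁}v₁,…,t^{aₙ}vₙ)`.  The orbit of `v` is closed iff `v` is a fixed point,
i.e. `vᵢ = 0` for every `i` with `aᵢ ≠ 0`. -/
theorem stmt7 (n : ℕ) (a : Fin n → ℕ) (v : Fin n → ℂ) :
    IsClosed {w : Fin n → ℂ | ∃ t : ℂˣ, w = fun i => (t : ℂ) ^ (a i) * v i}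
      ↔ ∀ i, a i ≠ 0 → v i = 0 := by
  constructor
  · intro hcl
    by_contra h
    push_neg at h
    obtain ⟨i₀, ha₀, hv₀⟩ := h
    -- units with value 1/(k+1)
    have hne : ∀ k : ℕ, ((k : ℂ) + 1) ≠ 0 := by
      intro k
      exact Nat.cast_add_one_ne_zero k
    set u : ℕ → ℂˣ := fun k => Units.mk0 (((k : ℂ) + 1))⁻¹ (inv_ne_zero (hne k)) with hu
    set w₀ : Fin n → ℂ := fun i => if a i = 0 then v i else 0 with hw₀
    have hmem : ∀ k, (fun i => ((u k : ℂ)) ^ (a i) * v i) ∈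
        {w : Fin n → ℂ | ∃ t : ℂˣ, w = fun i => (t : ℂ) ^ (a i) * v i} := by
      intro k; exact ⟨u k, rfl⟩
    have htend : Filter.Tendsto (fun k => (fun i => ((u k : ℂ)) ^ (a i) * v i))
        Filter.atTop (nhds w₀) := by
      rw [tendsto_pi_nhds]
      intro i
      by_cases hai : a i = 0
      · simp [hai, hw₀, tendsto_const_nhds]
      · have h1 : Filter.Tendsto (fun k : ℕ => ((u k : ℂ)) ^ (a i) * v i)
            Filter.atTop (nhds ((0 : ℂ) ^ (a i) * v i)) :=
          ((aux_tendsto_inv.pow (a i)).mul_const (v i))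
        simpa [hai, hw₀, zero_pow hai] using h1
    have hw₀mem := hcl.mem_of_tendsto htend (Filter.Eventually.of_forall hmem)
    obtain ⟨t, ht⟩ := hw₀mem
    have := congrFun ht i₀
    simp only [hw₀, ha₀, if_neg ha₀] at this
    exact hv₀ (by
      have htne : (t : ℂ) ^ (a i₀) ≠ 0 := pow_ne_zero _ t.ne_zero
      field_simp at this
      exact (mul_eq_zero.mp this.symm).resolve_left htne)
  · intro h
    have : {w : Fin n → ℂ | ∃ t : ℂˣ, w = fun i => (t : ℂ) ^ (a i) * v i} = {v} := by
      ext w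
      simp only [Set.mem_setOf_eq, Set.mem_singleton_iff]
      constructor
      · rintro ⟨t, rfl⟩
        funext i
        by_cases hai : a i = 0
        · simp [hai]
        · simp [h i hai]
      · rintro rfl
        exact ⟨1, by simp⟩
    rw [this]
    exact isClosed_singleton
end

section
/- Let H be a finite group acting faithfully and ℂ-linearly on W = ℂⁿ, let p : W → W/H be the quotient map onto the orbit space with the quotient topology, and let U ⊆ W/H be such that Ω := p⁻¹(U) is open and connected in ℂⁿ. Let Θ : Ω → Ω be a bijection such that both Θ and Θ⁻¹ are holomorphic on Ω and such that Θ maps H-orbits to H-orbits, i.e., for w, w′ ∈ Ω, p(w) = p(w′) implies p(Θ(w)) = p(Θ(w′)), and likewise for Θ⁻¹. Then there exists a group automorphism σ of H such that Θ(h • w) = σ(h) • Θ(w) for all h ∈ H and all w ∈ Ω. -/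
open Metric Set Filter



/-- Identity theorem for holomorphic maps on open connected subsets of `ℂⁿ`,
proved by restricting to complex lines. -/
lemma line_identity {n : ℕ} {Φ Ψ : (Fin n → ℂ) → (Fin n → ℂ)} {Ω : Set (Fin n → ℂ)}
    (hΩ : IsOpen Ω) (hΩc : IsPreconnected Ω)
    (hΦ : DifferentiableOn ℂ Φ Ω) (hΨ : DifferentiableOn ℂ Ψ Ω)
    {x₀ : Fin n → ℂ} (hx₀ : x₀ ∈ Ω) (hev : Φ =ᶠ[nhds x₀] Ψ) :
    Set.EqOn Φ Ψ Ω := by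
  -- the ball claim
  have key : ∀ (c : Fin n → ℂ) (r : ℝ), ball c r ⊆ Ω → Φ =ᶠ[nhds c] Ψ →
      ∀ u ∈ ball c r, Φ u = Ψ u := by
    intro c r hball hevc u hu
    rcases eq_or_ne u c with rfl | hne
    · exact hevc.eq_of_nhds
    have hvpos : 0 < ‖u - c‖ := by simpa [sub_eq_zero] using hne
    set v := u - c with hv
    set R : ℝ := r / ‖v‖ with hR
    have h1R : 1 < R := by
      rw [hR, lt_div_iff₀ hvpos, one_mul]
      simpa [dist_eq_norm] using hu
    have hRpos : 0 < R := lt_trans one_pos h1R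
    set γ : ℂ → (Fin n → ℂ) := fun t => c + t • v with hγ
    have hγdiff : Differentiable ℂ γ := by
      exact (differentiable_const c).add (differentiable_id.smul_const v)
    have hγmaps : MapsTo γ (ball (0:ℂ) R) Ω := by
      intro t ht
      apply hball
      have : ‖t‖ < R := by simpa [dist_eq_norm] using ht
      have : ‖t‖ * ‖v‖ < R * ‖v‖ := by
        exact mul_lt_mul_of_pos_right this hvpos
      rw [hR, div_mul_cancel₀ _ (ne_of_gt hvpos)] at this
      simpa [hγ, dist_eq_norm, norm_smul] using this
    have hf : DifferentiableOn ℂ (Φ ∘ γ) (ball (0:ℂ) R) :=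
      hΦ.comp hγdiff.differentiableOn hγmaps
    have hg : DifferentiableOn ℂ (Ψ ∘ γ) (ball (0:ℂ) R) :=
      hΨ.comp hγdiff.differentiableOn hγmaps
    have hγ0 : γ 0 = c := by simp [hγ]
    have htend : Tendsto γ (nhds (0:ℂ)) (nhds c) := by
      have := hγdiff.continuous.continuousAt (x := (0:ℂ))
      rwa [ContinuousAt, hγ0] at this
    have hev' : (Φ ∘ γ) =ᶠ[nhds (0:ℂ)] (Ψ ∘ γ) := hevc.comp_tendsto htend
    have heq : Set.EqOn (Φ ∘ γ) (Ψ ∘ γ) (ball (0:ℂ) R) :=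
      AnalyticOnNhd.eqOn_of_preconnected_of_eventuallyEq
        (hf.analyticOnNhd isOpen_ball) (hg.analyticOnNhd isOpen_ball)
        (convex_ball (0:ℂ) R).isPreconnected (mem_ball_self hRpos) hev'
    have h1 : (1:ℂ) ∈ ball (0:ℂ) R := by simpa [dist_eq_norm] using h1R
    have := heq h1
    simpa [hγ, hv, Function.comp] using this
  set A : Set (Fin n → ℂ) := {w | w ∈ Ω ∧ Φ =ᶠ[nhds w] Ψ} with hA
  have hAopen : IsOpen A := by
    rw [isOpen_iff_mem_nhds]
    rintro w ⟨hwΩ, hwev⟩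
    filter_upwards [hwev.eventually_nhds, hΩ.mem_nhds hwΩ] with u h1 h2
    exact ⟨h2, h1⟩
  have hAsub : closure A ∩ Ω ⊆ A := by
    rintro w ⟨hwc, hwΩ⟩
    obtain ⟨ε, hε, hballε⟩ := Metric.isOpen_iff.mp hΩ w hwΩ
    obtain ⟨w', hw'A, hw'd⟩ := Metric.mem_closure_iff.mp hwc (ε/2) (by linarith)
    have hball' : ball w' (ε/2) ⊆ Ω := by
      intro z hz
      apply hballε
      have : dist z w ≤ dist z w' + dist w' w := dist_triangle _ _ _
      rw [mem_ball] at hz ⊢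
      rw [dist_comm] at hw'd
      linarith
    have heq' : ∀ u ∈ ball w' (ε/2), Φ u = Ψ u := key w' (ε/2) hball' hw'A.2
    have hwmem : w ∈ ball w' (ε/2) := by
      simpa [mem_ball] using hw'd
    exact ⟨hwΩ, Filter.eventuallyEq_of_mem (isOpen_ball.mem_nhds hwmem) heq'⟩
  have hsub : Ω ⊆ A :=
    hΩc.subset_of_closure_inter_subset hAopen ⟨x₀, hx₀, ⟨hx₀, hev⟩⟩ hAsub
  intro w hw
  exact (hsub hw).2.eq_of_nhds




/-- Linear maps agreeing on a nonempty open set are equal. -/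
lemma lin_eqOn {n : ℕ} {A B : (Fin n → ℂ) →ₗ[ℂ] (Fin n → ℂ)} {Ω : Set (Fin n → ℂ)}
    (hΩ : IsOpen Ω) (hne : Ω.Nonempty) (h : ∀ w ∈ Ω, A w = B w) : A = B := by
  obtain ⟨w₀, hw₀⟩ := hne
  obtain ⟨ε, hε, hball⟩ := Metric.isOpen_iff.mp hΩ w₀ hw₀
  apply LinearMap.ext
  intro v
  set r : ℝ := ε / (2 * (‖v‖ + 1)) with hrdef
  have hr : 0 < r := div_pos hε (by positivity)
  set c : ℂ := (r : ℂ) with hcdef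
  have hc0 : c ≠ 0 := by
    simp [hcdef, Complex.ofReal_eq_zero, ne_of_gt hr]
  have hnormc : ‖c‖ = r := by
    rw [hcdef, Complex.norm_real, Real.norm_of_nonneg hr.le]
  have hkey : r * (‖v‖ + 1) = ε / 2 := by
    rw [hrdef]; field_simp
  have hlt : ‖c • v‖ < ε := by
    rw [norm_smul, hnormc]
    nlinarith [norm_nonneg v, hr]
  have hmem : w₀ + c • v ∈ Ω := by
    apply hball
    simpa [dist_eq_norm] using hlt
  have h1 := h _ hmem
  rw [map_add, map_add, map_smul, map_smul, h _ hw₀] at h1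
  exact smul_right_injective _ hc0 (add_left_cancel h1)



/-- Let a finite group `H` act faithfully and `ℂ`-linearly on
`W = ℂⁿ` via `ρ`, and let `Ω = p⁻¹(U)` be an open connected `H`-saturated subset of
`W` (the preimage of a subset `U` of the orbit space).  Let `Θ : Ω → Ω` be a bijection
(with inverse `Θ'`), biholomorphic on `Ω`, mapping `H`-orbits to `H`-orbits (and
likewise for `Θ'`).  Then there is a group automorphism `σ` of `H` such that
`Θ(h • w) = σ(h) • Θ(w)` for all `h ∈ H` and `w ∈ Ω`. -/
theorem stmt9 (n : ℕ) (H : Type*) [Group H] [Finite H]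
    (ρ : H →* ((Fin n → ℂ) ≃ₗ[ℂ] (Fin n → ℂ)))
    (hfaithful : Function.Injective ρ)
    (Ω : Set (Fin n → ℂ)) (hΩopen : IsOpen Ω) (hΩconn : IsConnected Ω)
    (hΩsat : ∀ (h : H), ∀ w ∈ Ω, ρ h w ∈ Ω)
    (Θ Θ' : (Fin n → ℂ) → (Fin n → ℂ))
    (hmaps : Set.MapsTo Θ Ω Ω) (hmaps' : Set.MapsTo Θ' Ω Ω)
    (hinv : Set.InvOn Θ' Θ Ω Ω)
    (hhol : DifferentiableOn ℂ Θ Ω) (hhol' : DifferentiableOn ℂ Θ' Ω)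
    (horb : ∀ w ∈ Ω, ∀ w' ∈ Ω, (∃ h : H, ρ h w = w') → ∃ h : H, ρ h (Θ w) = Θ w')
    (horb' : ∀ w ∈ Ω, ∀ w' ∈ Ω, (∃ h : H, ρ h w = w') → ∃ h : H, ρ h (Θ' w) = Θ' w') :
    ∃ σ : H ≃* H, ∀ (h : H), ∀ w ∈ Ω, Θ (ρ h w) = ρ (σ h) (Θ w) := by
  obtain ⟨w₀, hw₀⟩ := hΩconn.nonempty
  -- group elements acting the same on Ω are equal
  have uniq : ∀ g g' : H, (∀ w ∈ Ω, ρ g w = ρ g' w) → g = g' := by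
    intro g g' hgg'
    apply hfaithful
    have := lin_eqOn (A := (ρ g : (Fin n → ℂ) →ₗ[ℂ] (Fin n → ℂ)))
      (B := (ρ g' : (Fin n → ℂ) →ₗ[ℂ] (Fin n → ℂ))) hΩopen ⟨w₀, hw₀⟩ hgg'
    exact LinearEquiv.toLinearMap_injective this
  -- each ρ g is differentiable
  have hdiffρ : ∀ g : H, Differentiable ℂ (fun w => ρ g w) := by
    intro g
    exact (LinearMap.toContinuousLinearMap ((ρ g : (Fin n → ℂ) →ₗ[ℂ] (Fin n → ℂ)))).differentiable
  -- Θ restricted to Ω is surjective onto Ω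
  have hsurj : ∀ u ∈ Ω, ∃ w ∈ Ω, Θ w = u := fun u hu => ⟨Θ' u, hmaps' hu, hinv.2 hu⟩
  -- key existence: for each h there is g with Θ (ρ h w) = ρ g (Θ w) on Ω
  have key : ∀ h : H, ∃ g : H, ∀ w ∈ Ω, Θ (ρ h w) = ρ g (Θ w) := by
    intro h
    set Φ : (Fin n → ℂ) → (Fin n → ℂ) := fun w => Θ (ρ h (Θ' w)) with hΦdef
    have hmapsin : MapsTo (fun w => ρ h (Θ' w)) Ω Ω := fun w hw => hΩsat h _ (hmaps' hw)
    have hΦdiff : DifferentiableOn ℂ Φ Ω :=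
      hhol.comp ((hdiffρ h).comp_differentiableOn hhol') hmapsin
    -- each point of Ω satisfies Φ w = ρ g w for some g
    have hcover : ∀ w ∈ Ω, ∃ g : H, Φ w = ρ g w := by
      intro w hw
      obtain ⟨g, hg⟩ := horb (Θ' w) (hmaps' hw) (ρ h (Θ' w)) (hΩsat h _ (hmaps' hw)) ⟨h, rfl⟩
      rw [hinv.2 hw] at hg
      exact ⟨g, hg.symm⟩
    -- Baire category on the open subset Ω
    haveI : LocallyCompactSpace ↥Ω := hΩopen.locallyCompactSpace
    haveI : Nonempty ↥Ω := ⟨⟨w₀, hw₀⟩⟩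
    set F : H → Set ↥Ω := fun g => {x | Φ (x : Fin n → ℂ) = ρ g (x : Fin n → ℂ)} with hFdef
    have hclosed : ∀ g, IsClosed (F g) := by
      intro g
      apply isClosed_eq
      · exact (hΦdiff.continuousOn).restrict
      · exact (hdiffρ g).continuous.comp continuous_subtype_val
    have hcover' : (⋃ g, F g) = univ := by
      rw [Set.eq_univ_iff_forall]
      intro x
      obtain ⟨g, hg⟩ := hcover x x.2
      exact Set.mem_iUnion.mpr ⟨g, hg⟩
    obtain ⟨g, x₀, hx₀⟩ := nonempty_interior_of_iUnion_of_closed hclosed hcover'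
    refine ⟨g, ?_⟩
    -- transfer the interior point to an eventual equality in ℂⁿ
    have hemb := hΩopen.isOpenEmbedding_subtypeVal
    have hVopen : IsOpen (Subtype.val '' interior (F g)) :=
      hemb.isOpenMap _ isOpen_interior
    have hev : Φ =ᶠ[nhds (x₀ : Fin n → ℂ)] (fun w => ρ g w) := by
      apply Filter.eventuallyEq_of_mem (hVopen.mem_nhds ⟨x₀, hx₀, rfl⟩)
      rintro y ⟨x, hx, rfl⟩
      have : x ∈ F g := interior_subset hx
      exact this
    have hEq : Set.EqOn Φ (fun w => ρ g w) Ω :=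
      line_identity hΩopen hΩconn.isPreconnected hΦdiff
        ((hdiffρ g).differentiableOn) x₀.2 hev
    intro w hw
    have := hEq (hmaps hw)
    simpa [hΦdef, hinv.1 hw] using this
  -- uniqueness of the g in `key`
  have uniqQ : ∀ (h g g' : H), (∀ w ∈ Ω, Θ (ρ h w) = ρ g (Θ w)) →
      (∀ w ∈ Ω, Θ (ρ h w) = ρ g' (Θ w)) → g = g' := by
    intro h g g' h1 h2
    apply uniq
    intro u hu
    obtain ⟨w, hw, rfl⟩ := hsurj u hu
    rw [← h1 w hw, ← h2 w hw]
  -- definition of σ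
  choose σ₀ hσ₀ using key
  have hmul : ∀ h₁ h₂ : H, σ₀ (h₁ * h₂) = σ₀ h₁ * σ₀ h₂ := by
    intro h₁ h₂
    apply uniqQ (h₁ * h₂) _ _ (hσ₀ _)
    intro w hw
    have e1 : ρ (h₁ * h₂) w = ρ h₁ (ρ h₂ w) := by rw [map_mul]; rfl
    have e2 : ρ (σ₀ h₁ * σ₀ h₂) (Θ w) = ρ (σ₀ h₁) (ρ (σ₀ h₂) (Θ w)) := by rw [map_mul]; rfl
    rw [e1, e2, hσ₀ h₁ _ (hΩsat h₂ w hw), hσ₀ h₂ w hw]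
  have hinj : Function.Injective σ₀ := by
    intro h h' hhh'
    apply uniq
    intro w hw
    have h1 := hσ₀ h w hw
    have h2 := hσ₀ h' w hw
    rw [hhh'] at h1
    have : Θ (ρ h w) = Θ (ρ h' w) := h1.trans h2.symm
    have := congrArg Θ' this
    rwa [hinv.1 (hΩsat h w hw), hinv.1 (hΩsat h' w hw)] at this
  let σm : H →* H := MonoidHom.mk' σ₀ hmul
  have hbij : Function.Bijective σm := (Finite.injective_iff_bijective).mp hinj
  exact ⟨MulEquiv.ofBijective σm hbij, fun h w hw => hσ₀ h w hw⟩
end
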